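/- Suppose f : ℝ^d → ℝ is twice differentiable, k-strongly convex and M-smooth with minimizer w*, and Ĥ_t is a symmetric positive definite matrix satisfying λ_max(Ĥ_t) ≤ (1+ε)M. If w_{t+1} = w_t + α_t p_t with p_t = -Ĥ_t^{-1}∇f(w_t) and the Armijo condition f(w_{t+1}) ≤ f(w_t) + α_t β p_tᵀ∇f(w_t) holds, then f(w_{t+1}) - f(w*) ≤ (1 - ρ)(f(w_t) - f(w*)) where ρ = 2α_t β k / (M(1+ε)). -/

import Mathlib

open scoped RealInnerProductSpace

-- Cauchy–Schwarz for a symmetric PSD bilinear form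
lemma cs_psd {E : Type*} [NormedAddCommGroup E] [InnerProductSpace ℝ E]
    (H : E →L[ℝ] E) (hsym : ∀ u v, ⟪H u, v⟫ = ⟪u, H v⟫)
    (hpsd : ∀ v, 0 ≤ ⟪v, H v⟫) (u w : E) :
    ⟪u, H w⟫ ^ 2 ≤ ⟪u, H u⟫ * ⟪w, H w⟫ := by
  have h : ∀ t : ℝ, 0 ≤ ⟪w, H w⟫ * (t * t) + (2 * ⟪u, H w⟫) * t + ⟪u, H u⟫ := by
    intro t
    have := hpsd (u + t • w)
    have hexp : ⟪u + t • w, H (u + t • w)⟫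
        = ⟪w, H w⟫ * (t * t) + (2 * ⟪u, H w⟫) * t + ⟪u, H u⟫ := by
      simp only [map_add, map_smul, inner_add_left, inner_add_right,
        real_inner_smul_left, real_inner_smul_right]
      have h1 : ⟪w, H u⟫ = ⟪u, H w⟫ := by rw [real_inner_comm, hsym]
      rw [h1]; ring
    linarith [hexp ▸ this]
  have hd := discrim_le_zero h
  rw [discrim] at hd
  nlinarith [hd]

lemma strong_lb {d : ℕ} (k : ℝ) (f : EuclideanSpace ℝ (Fin d) → ℝ)
    (hgrad : ∀ w, HasGradientAt f (gradient f w) w)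
    (Hf : EuclideanSpace ℝ (Fin d) →
      EuclideanSpace ℝ (Fin d) →L[ℝ] EuclideanSpace ℝ (Fin d))
    (hHf : ∀ w, HasFDerivAt (gradient f) (Hf w) w)
    (hstrong : ∀ w v, k * ‖v‖ ^ 2 ≤ ⟪v, Hf w v⟫)
    (wt w : EuclideanSpace ℝ (Fin d)) :
    f wt + ⟪gradient f wt, w - wt⟫ + k / 2 * ‖w - wt‖ ^ 2 ≤ f w := by
  set v := w - wt with hv
  -- the curve c s = wt + s • v
  have hc : ∀ s : ℝ, HasDerivAt (fun s : ℝ => wt + s • v) v s := by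
    intro s
    simpa using ((hasDerivAt_id s).smul_const v).const_add wt
  set c : ℝ → EuclideanSpace ℝ (Fin d) := fun s => wt + s • v with hcdef
  -- derivative of φ s = f (c s)
  have hφ : ∀ s : ℝ, HasDerivAt (fun s => f (c s)) ⟪gradient f (c s), v⟫ s := by
    intro s
    have := ((hgrad (c s)).hasFDerivAt.comp_hasDerivAt s (hc s))
    exact this
  -- derivative of g s = ⟪v, gradient f (c s)⟫
  have hg : ∀ s : ℝ, HasDerivAt (fun s => ⟪v, gradient f (c s)⟫) ⟪v, Hf (c s) v⟫ s := by
    intro s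
    have h1 : HasDerivAt (fun s => gradient f (c s)) (Hf (c s) v) s :=
      (hHf (c s)).comp_hasDerivAt s (hc s)
    have := ((innerSL ℝ v).hasFDerivAt.comp_hasDerivAt s h1)
    exact this
  -- h s = ⟪v, gradient f (c s)⟫ - k ‖v‖² s is monotone
  have hgder : ∀ s : ℝ, HasDerivAt (fun s => ⟪v, gradient f (c s)⟫ - k * ‖v‖ ^ 2 * s)
      (⟪v, Hf (c s) v⟫ - k * ‖v‖ ^ 2) s := by
    intro s
    exact ((hg s).sub ((hasDerivAt_id s).const_mul (k * ‖v‖ ^ 2))).congr_deriv (by ring)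
  have hmono : Monotone (fun s => ⟪v, gradient f (c s)⟫ - k * ‖v‖ ^ 2 * s) := by
    apply monotone_of_deriv_nonneg (fun s => (hgder s).differentiableAt)
    intro s
    rw [(hgder s).deriv]
    linarith [hstrong (c s) v]
  -- Φ s = f (c s) - ⟪∇f wt, v⟫ s - k‖v‖²/2 s² is monotone on [0, ∞)
  have hΦder : ∀ s : ℝ, HasDerivAt
      (fun s => f (c s) - ⟪gradient f wt, v⟫ * s - k / 2 * ‖v‖ ^ 2 * (s * s))
      (⟪gradient f (c s), v⟫ - ⟪gradient f wt, v⟫ - k / 2 * ‖v‖ ^ 2 * (s + s)) s := by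
    intro s
    have := ((hφ s).sub ((hasDerivAt_id s).const_mul ⟪gradient f wt, v⟫)).sub
      (((hasDerivAt_id s).mul (hasDerivAt_id s)).const_mul (k / 2 * ‖v‖ ^ 2))
    exact this.congr_deriv (by simp only [id]; ring)
  have hΦmono : MonotoneOn
      (fun s => f (c s) - ⟪gradient f wt, v⟫ * s - k / 2 * ‖v‖ ^ 2 * (s * s))
      (Set.Ici (0:ℝ)) := by
    apply monotoneOn_of_deriv_nonneg (convex_Ici 0)
    · exact (Differentiable.continuous (fun s => (hΦder s).differentiableAt)).continuousOn
    · exact fun s _ => (hΦder s).differentiableAt.differentiableWithinAt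
    · intro s hs
      rw [interior_Ici] at hs
      rw [(hΦder s).deriv]
      have h0 : (fun s => ⟪v, gradient f (c s)⟫ - k * ‖v‖ ^ 2 * s) 0
          ≤ (fun s => ⟪v, gradient f (c s)⟫ - k * ‖v‖ ^ 2 * s) s :=
        hmono (le_of_lt hs)
      simp only at h0
      have hc0 : c 0 = wt := by simp [hcdef]
      rw [hc0] at h0
      have hcomm : ⟪gradient f wt, v⟫ = ⟪v, gradient f wt⟫ := real_inner_comm _ _
      have hcomm2 : ⟪gradient f (c s), v⟫ = ⟪v, gradient f (c s)⟫ := real_inner_comm _ _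
      nlinarith [h0, le_of_lt (Set.mem_Ioi.mp hs)]
  have h01 := hΦmono (Set.self_mem_Ici) (by norm_num : (1:ℝ) ∈ Set.Ici (0:ℝ)) zero_le_one
  simp only at h01
  have hc0 : c 0 = wt := by simp [hcdef]
  have hc1 : c 1 = w := by simp [hcdef, hv]
  rw [hc0, hc1] at h01
  simp only [mul_zero, mul_one, sub_zero] at h01
  linarith [h01]

theorem stmt_3 {d : ℕ} (k M ε β αt : ℝ) (hk : 0 < k) (hkM : k ≤ M)
    (hε : 0 ≤ ε) (hβ0 : 0 < β) (hβ1 : β ≤ 1 / 2) (hαt : 0 < αt)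
    (f : EuclideanSpace ℝ (Fin d) → ℝ)
    (hgrad : ∀ w, HasGradientAt f (gradient f w) w)
    (Hf : EuclideanSpace ℝ (Fin d) →
      EuclideanSpace ℝ (Fin d) →L[ℝ] EuclideanSpace ℝ (Fin d))
    (hHf : ∀ w, HasFDerivAt (gradient f) (Hf w) w)
    (hstrong : ∀ w v, k * ‖v‖ ^ 2 ≤ ⟪v, Hf w v⟫)
    (hsmooth : ∀ w v, ⟪v, Hf w v⟫ ≤ M * ‖v‖ ^ 2)
    (wstar : EuclideanSpace ℝ (Fin d)) (hmin : ∀ w, f wstar ≤ f w)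
    (Hhat : EuclideanSpace ℝ (Fin d) →L[ℝ] EuclideanSpace ℝ (Fin d))
    (hsym : ∀ u v, ⟪Hhat u, v⟫ = ⟪u, Hhat v⟫)
    (hpd : ∀ v, v ≠ 0 → 0 < ⟪v, Hhat v⟫)
    (hup : ∀ v, ⟪v, Hhat v⟫ ≤ (1 + ε) * M * ‖v‖ ^ 2)
    (wt wt1 pt : EuclideanSpace ℝ (Fin d))
    (hpt : Hhat pt = -gradient f wt)
    (hupdate : wt1 = wt + αt • pt)
    (harmijo : f wt1 ≤ f wt + αt * β * ⟪pt, gradient f wt⟫) :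
    f wt1 - f wstar ≤ (1 - 2 * αt * β * k / (M * (1 + ε))) * (f wt - f wstar) := by
  have hM : 0 < M := lt_of_lt_of_le hk hkM
  have hcpos : 0 < M * (1 + ε) := by positivity
  have hpsd : ∀ v, 0 ≤ ⟪v, Hhat v⟫ := by
    intro v
    by_cases h : v = 0
    · simp [h]
    · exact le_of_lt (hpd v h)
  set G := ‖gradient f wt‖ ^ 2 with hG
  -- Step 1: G ≤ (1+ε) M ⟪pt, Hhat pt⟫
  have hkey : G ≤ (1 + ε) * M * ⟪pt, Hhat pt⟫ := by
    have hcs := cs_psd Hhat hsym hpsd pt (Hhat pt)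
    have h1 : ⟪pt, Hhat (Hhat pt)⟫ = ‖Hhat pt‖ ^ 2 := by
      rw [← hsym]; exact real_inner_self_eq_norm_sq _
    have h2 : ⟪Hhat pt, Hhat (Hhat pt)⟫ ≤ (1 + ε) * M * ‖Hhat pt‖ ^ 2 := hup _
    have hGeq : G = ‖Hhat pt‖ ^ 2 := by rw [hG, hpt, norm_neg]
    rw [h1] at hcs
    rw [hGeq]
    rcases eq_or_lt_of_le (sq_nonneg ‖Hhat pt‖) with h0 | h0
    · rw [← h0]
      exact mul_nonneg (by positivity) (hpsd pt)
    · nlinarith [hpsd pt, hpsd (Hhat pt)]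
  -- Step 2: 2 k (f wt - f wstar) ≤ G
  have hgap : 2 * k * (f wt - f wstar) ≤ G := by
    have hlb := strong_lb k f hgrad Hf hHf hstrong wt wstar
    have hCS : -⟪gradient f wt, wstar - wt⟫ ≤ ‖gradient f wt‖ * ‖wstar - wt‖ := by
      have := abs_real_inner_le_norm (gradient f wt) (wstar - wt)
      linarith [neg_abs_le ⟪gradient f wt, wstar - wt⟫]
    nlinarith [sq_nonneg (‖gradient f wt‖ - k * ‖wstar - wt‖), hk, sq_nonneg ‖wstar - wt‖]
  -- Step 3: Armijo
  have hPG : ⟪pt, gradient f wt⟫ = -⟪pt, Hhat pt⟫ := by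
    have h : gradient f wt = -Hhat pt := by rw [hpt, neg_neg]
    rw [h, inner_neg_right]
  have hA : 0 ≤ f wt - f wstar := by linarith [hmin wt]
  have h1 : f wt1 - f wstar ≤ (f wt - f wstar) - αt * β * ⟪pt, Hhat pt⟫ := by
    rw [hPG] at harmijo; linarith
  have hmain : (M * (1 + ε)) * (f wt1 - f wstar)
      ≤ (M * (1 + ε) - 2 * αt * β * k) * (f wt - f wstar) := by
    nlinarith [mul_le_mul_of_nonneg_left h1 hcpos.le,
      mul_le_mul_of_nonneg_left hkey (le_of_lt (mul_pos hαt hβ0)),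
      mul_le_mul_of_nonneg_left hgap (le_of_lt (mul_pos hαt hβ0))]
  rw [show (1 - 2 * αt * β * k / (M * (1 + ε))) = (M * (1 + ε) - 2 * αt * β * k) / (M * (1 + ε)) by field_simp,
    div_mul_eq_mul_div, le_div_iff₀ hcpos]
  linarith [hmain]
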